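/- Let G be a finite simple graph with at least two vertices and let H be a nonempty induced bipartite subgraph of G. Then λ(G) ≤ -d̄(H), where d̄(H) = 2|E(H)|/|V(H)| is the average degree of H. -/

import Mathlib

/-!
Common definitions: smallest adjacency eigenvalue, independent vertex sets,
edge counts of induced subgraphs, chromatic number, independence number,
and the invariants `η`, `ι`, `θ` from the paper.
-/

open Finset SimpleGraph Matrix

set_option linter.unusedSectionVars false

variable {V : Type} [Fintype V] [DecidableEq V]

/-- A finite set of vertices is an independent set in `G`. -/
def IsIndepFinset (G : SimpleGraph V) (s : Finset V) : Prop :=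
  ∀ u ∈ s, ∀ v ∈ s, ¬ G.Adj u v

/-- The adjacency matrix of a finite graph is Hermitian (over `ℝ`). -/
theorem adj_isHermitian (G : SimpleGraph V) [DecidableRel G.Adj] :
    (G.adjMatrix ℝ).IsHermitian := by
  rw [Matrix.IsHermitian, conjTranspose_eq_transpose_of_trivial]
  exact isSymm_adjMatrix G

/-- `λ(G)`: the smallest eigenvalue of the adjacency matrix of `G`. -/
noncomputable def lambdaMin (G : SimpleGraph V) : ℝ :=
  letI := Classical.decRel G.Adj
  ⨅ i, (adj_isHermitian G).eigenvalues i

/-- `|E(G)|`: the number of edges of `G`. -/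
noncomputable def edgeCount (G : SimpleGraph V) : ℕ := Nat.card G.edgeSet

/-- The number of edges of the subgraph of `G` induced on the vertex set `s`. -/
noncomputable def inducedEdgeCount (G : SimpleGraph V) (s : Finset V) : ℕ :=
  Nat.card (G.induce (s : Set V)).edgeSet

/-- `χ(G)`: the chromatic number of `G`, as a natural number. -/
noncomputable def chromNum (G : SimpleGraph V) : ℕ := G.chromaticNumber.toNat

/-- `α(G)`: the independence number of `G`. -/
noncomputable def indepNum (G : SimpleGraph V) : ℕ :=
  sSup {k | ∃ s : Finset V, IsIndepFinset G s ∧ s.card = k}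

/-- `θ(G) = min {n/2, α(G)}`. -/
noncomputable def theta (G : SimpleGraph V) : ℝ :=
  min ((Fintype.card V : ℝ) / 2) (_root_.indepNum G : ℝ)

/-- `η(G)`: the supremum of `|E(H)| / √(|V₁|·|V₂|)` over all induced bipartite
subgraphs `H` of `G` with bipartition into nonempty independent sets `V₁`, `V₂`. -/
noncomputable def eta (G : SimpleGraph V) : ℝ :=
  sSup {x : ℝ | ∃ V₁ V₂ : Finset V, V₁.Nonempty ∧ V₂.Nonempty ∧ Disjoint V₁ V₂ ∧
    IsIndepFinset G V₁ ∧ IsIndepFinset G V₂ ∧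
    x = (inducedEdgeCount G (V₁ ∪ V₂) : ℝ) / Real.sqrt ((V₁.card : ℝ) * (V₂.card : ℝ))}

/-- `ι(G)`: the supremum of the average degree `2|E(H)|/|V(H)|` over all nonempty
induced bipartite subgraphs `H` of `G`. -/
noncomputable def iota (G : SimpleGraph V) : ℝ :=
  sSup {x : ℝ | ∃ V₁ V₂ : Finset V, (V₁ ∪ V₂).Nonempty ∧ Disjoint V₁ V₂ ∧
    IsIndepFinset G V₁ ∧ IsIndepFinset G V₂ ∧
    x = 2 * (inducedEdgeCount G (V₁ ∪ V₂) : ℝ) / ((V₁ ∪ V₂).card : ℝ)}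


section Aux

lemma rayleigh_min {n : Type*} [Fintype n] [DecidableEq n] [Nonempty n]
    {A : Matrix n n ℝ} (hA : A.IsHermitian) (x : n → ℝ) :
    (⨅ i, hA.eigenvalues i) * (x ⬝ᵥ x) ≤ x ⬝ᵥ (A *ᵥ x) := by
  set U : Matrix n n ℝ := (hA.eigenvectorUnitary : Matrix n n ℝ) with hU
  set y : n → ℝ := star U *ᵥ x with hy
  have hUU : U * star U = 1 := (Matrix.mem_unitaryGroup_iff).mp hA.eigenvectorUnitary.2
  have hxy : x = U *ᵥ y := by
    rw [hy, mulVec_mulVec, hUU, one_mulVec]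
  have hdot : ∀ z : n → ℝ, x ⬝ᵥ (U *ᵥ z) = y ⬝ᵥ z := by
    intro z
    rw [dotProduct_mulVec, hy]
    congr 1
    rw [star_eq_conjTranspose, conjTranspose_eq_transpose_of_trivial, mulVec_transpose]
  have hxx : x ⬝ᵥ x = ∑ i, (y i)^2 := by
    nth_rewrite 2 [hxy]
    rw [hdot]
    simp [dotProduct, sq, hy]
  have hAx : x ⬝ᵥ (A *ᵥ x) = ∑ i, hA.eigenvalues i * (y i)^2 := by
    conv_lhs => rw [hA.spectral_theorem, Unitary.conjStarAlgAut_apply, ← hU, ← mulVec_mulVec, ← hy, ← mulVec_mulVec, hdot]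
    simp [dotProduct, mulVec_diagonal, sq]
    ring_nf
    exact Finset.sum_congr rfl fun i _ => by ring
  rw [hxx, hAx, Finset.mul_sum]
  apply Finset.sum_le_sum
  intro i _
  have h1 : (⨅ j, hA.eigenvalues j) ≤ hA.eigenvalues i :=
    ciInf_le (Set.Finite.bddBelow (Set.finite_range _)) i
  nlinarith [sq_nonneg (y i)]

lemma two_mul_iec (G : SimpleGraph V) [DecidableRel G.Adj] (s : Finset V) :
    2 * inducedEdgeCount G s = ∑ u ∈ s, ∑ v ∈ s, if G.Adj u v then 1 else 0 := by
  classical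
  set H := G.induce (s : Set V) with hH
  have hcard : Nat.card H.edgeSet = H.edgeFinset.card := by
    rw [Nat.card_eq_fintype_card, SimpleGraph.edgeFinset_card]
  rw [inducedEdgeCount, ← hH, hcard, ← SimpleGraph.sum_degrees_eq_twice_card_edges]
  have hdeg : ∀ v : ↥(s : Set V), H.degree v = ∑ u ∈ s, if G.Adj v u then 1 else 0 := by
    intro v
    rw [SimpleGraph.degree, SimpleGraph.neighborFinset_eq_filter, Finset.card_filter,
      Finset.sum_subtype (p := fun x => x ∈ (s : Set V)) s (by simp)
        (fun u => if G.Adj v u then 1 else 0)]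
    apply Finset.sum_congr rfl
    intro u _
    congr 1
  rw [Finset.sum_subtype (p := fun x => x ∈ (s : Set V)) s (by simp)
    (fun u => ∑ v ∈ s, if G.Adj u v then 1 else 0)]
  exact Finset.sum_congr rfl fun v _ => hdeg v

end Aux

/-- Theorem 2.4. Let `G` be a graph with at least two vertices and let
`H` be a nonempty induced bipartite subgraph of `G`, with bipartition `V₁ ∪ V₂` into
independent sets. Then `λ(G) ≤ -d̄(H)` where `d̄(H) = 2|E(H)|/|V(H)|`. -/
theorem smallest_eigenvalue_le_neg_avg_degree (G : SimpleGraph V)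
    (hV : 2 ≤ Fintype.card V)
    (V₁ V₂ : Finset V) (hne : (V₁ ∪ V₂).Nonempty) (hdisj : Disjoint V₁ V₂)
    (hi₁ : IsIndepFinset G V₁) (hi₂ : IsIndepFinset G V₂) :
    lambdaMin G ≤
      -(2 * (inducedEdgeCount G (V₁ ∪ V₂) : ℝ) / ((V₁ ∪ V₂).card : ℝ)) := by
  letI := Classical.decRel G.Adj
  haveI : Nonempty V := Fintype.card_pos_iff.mp (by omega)
  set s : Finset V := V₁ ∪ V₂ with hs
  set x : V → ℝ := fun v => if v ∈ V₁ then 1 else if v ∈ V₂ then -1 else 0 with hxdef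
  have hvanish : ∀ v, v ∉ s → x v = 0 := by
    intro v hv
    simp only [hs, Finset.mem_union, not_or] at hv
    simp [hxdef, hv.1, hv.2]
  have hxx : x ⬝ᵥ x = (s.card : ℝ) := by
    rw [dotProduct]
    have : ∀ v : V, x v * x v = if v ∈ s then (1:ℝ) else 0 := by
      intro v
      by_cases h1 : v ∈ V₁
      · simp [hxdef, h1, hs, Finset.mem_union]
      · by_cases h2 : v ∈ V₂
        · simp [hxdef, h1, h2, hs, Finset.mem_union]
        · simp [hxdef, h1, h2, hs, Finset.mem_union]
    simp only [this]
    simp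
  have hterm : ∀ u ∈ s, ∀ v ∈ s,
      x u * ((if G.Adj u v then (1:ℝ) else 0) * x v) = -(if G.Adj u v then (1:ℝ) else 0) := by
    intro u hu v hv
    by_cases h : G.Adj u v
    · simp only [if_pos h]
      rcases Finset.mem_union.mp hu with hu1 | hu2 <;>
        rcases Finset.mem_union.mp hv with hv1 | hv2
      · exact absurd h (hi₁ u hu1 v hv1)
      · have hv1 : v ∉ V₁ := Finset.disjoint_right.mp hdisj hv2
        simp [hxdef, hu1, hv1, hv2]
      · have hu1 : u ∉ V₁ := Finset.disjoint_right.mp hdisj hu2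
        simp [hxdef, hu1, hu2, hv1]
      · exact absurd h (hi₂ u hu2 v hv2)
    · simp [h]
  have hquad : x ⬝ᵥ (G.adjMatrix ℝ *ᵥ x) =
      -(∑ u ∈ s, ∑ v ∈ s, if G.Adj u v then (1:ℝ) else 0) := by
    rw [dotProduct]
    simp only [mulVec, dotProduct, adjMatrix_apply]
    rw [← Finset.sum_subset (Finset.subset_univ s)
      (by intro u _ hu; simp [hvanish u hu])]
    rw [← Finset.sum_neg_distrib]
    apply Finset.sum_congr rfl
    intro u hu
    rw [Finset.mul_sum, ← Finset.sum_subset (Finset.subset_univ s)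
      (by intro v _ hv; simp [hvanish v hv]), ← Finset.sum_neg_distrib]
    exact Finset.sum_congr rfl fun v hv => hterm u hu v hv
  have hsum : (∑ u ∈ s, ∑ v ∈ s, if G.Adj u v then (1:ℝ) else 0) =
      (2 * inducedEdgeCount G s : ℕ) := by
    rw [two_mul_iec G s]
    push_cast
    rfl
  have key := rayleigh_min (adj_isHermitian G) x
  rw [hxx, hquad, hsum] at key
  have hc : (0:ℝ) < (s.card : ℝ) := by
    exact_mod_cast Finset.card_pos.mpr hne
  rw [show -(2 * (inducedEdgeCount G s : ℝ) / ((s.card : ℕ) : ℝ)) =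
    (-(2 * (inducedEdgeCount G s : ℝ))) / ((s.card : ℕ) : ℝ) from by ring, le_div_iff₀ hc]
  exact le_trans key (le_of_eq (by push_cast; ring))
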